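/- arXiv:0808.2932 — 2 statements merged into one kernel-verified Lean document; each statement's English description precedes it below -/
import Mathlib

section
/- The following hold: (1) rigid groups are torsion-free solvable groups; (2) torsion-free abelian groups are rigid; (3) subgroups of rigid groups are rigid; (4) a direct product of two groups, one of which is non-abelian, is not rigid; (5) non-abelian groups with non-trivial center are not rigid. -/
/-!
STATEMENT 13 (Proposition, basic properties of rigid groups):
(1) rigid groups are torsion-free solvable groups;
(2) torsion-free abelian groups are rigid;
(3) subgroups of rigid groups are rigid;
(4) a direct product of two (nontrivial) groups, one of which is non-abelian, is not rigid;
(5) non-abelian groups with non-trivial center are not rigid.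
-/

open scoped commutatorElement

/-- A principal series of length `n`: `s 0 = G ≥ ... ≥ s n = 1`, each term normal in `G`,
strictly decreasing, with abelian factors `s i / s (i+1)` that are torsion-free as right
`ℤ[G / s i]`-modules (the module structure given by conjugation); the torsion-freeness is
expressed elementwise: a nonzero element of the group ring (given by representatives
`h j` of pairwise distinct cosets modulo `s i` and integer coefficients `m j`, not all zero)
applied to `c ∈ s i` lies in `s (i+1)` only if `c` does. -/
def IsPrincipalSeries {G : Type*} [Group G] {n : ℕ} (s : Fin (n + 1) → Subgroup G) : Prop :=
  s 0 = ⊤ ∧ s (Fin.last n) = ⊥ ∧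
  (∀ i, (s i).Normal) ∧
  (∀ i : Fin n, s i.succ < s i.castSucc) ∧
  (∀ i : Fin n, ∀ x ∈ s i.castSucc, ∀ y ∈ s i.castSucc, ⁅x, y⁆ ∈ s i.succ) ∧
  (∀ i : Fin n, ∀ c ∈ s i.castSucc, ∀ (k : ℕ) (h : Fin k → G) (m : Fin k → ℤ),
    (∀ j l : Fin k, j ≠ l → (h j)⁻¹ * h l ∉ s i.castSucc) →
    (∃ j, m j ≠ 0) →
    (List.ofFn fun j => ((h j)⁻¹ * c * h j) ^ m j).prod ∈ s i.succ →
    c ∈ s i.succ)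

/-- A group is `n`-rigid if it has a principal series of length `n`. -/
def IsRigid (G : Type*) [Group G] (n : ℕ) : Prop :=
  ∃ s : Fin (n + 1) → Subgroup G, IsPrincipalSeries s

/-- The family `t` of elements of `Gi` is linearly independent (in the factor `Gi/Gi1`)
over the group ring `ℤ[G/Gi]`, expressed elementwise. -/
def LinIndepMod {G : Type*} [Group G] (Gi Gi1 : Subgroup G) {k : ℕ} (t : Fin k → G) : Prop :=
  (∀ j, t j ∈ Gi) ∧
  ∀ (l : ℕ) (h : Fin k → Fin l → G) (m : Fin k → Fin l → ℤ),
    (∀ j, ∀ p q : Fin l, p ≠ q → (h j p)⁻¹ * h j q ∉ Gi) →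
    (List.ofFn fun j : Fin k =>
      (List.ofFn fun p : Fin l => ((h j p)⁻¹ * t j * h j p) ^ m j p).prod).prod ∈ Gi1 →
    ∀ j p, m j p = 0

/-- The rank of the factor `Gi/Gi1` as a `ℤ[G/Gi]`-module: the supremum of cardinalities
of linearly independent families. -/
noncomputable def rankAt {G : Type*} [Group G] (Gi Gi1 : Subgroup G) : ℕ∞ :=
  ⨆ (k : ℕ) (_ : ∃ t : Fin k → G, LinIndepMod Gi Gi1 t), (k : ℕ∞)

/-- `r_i(G)` computed from a principal series `s`. -/
noncomputable def seriesRank {G : Type*} [Group G] {n : ℕ} (s : Fin (n + 1) → Subgroup G)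
    (i : Fin n) : ℕ∞ :=
  rankAt (s i.castSucc) (s i.succ)


section helpers
variable {G : Type*} [Group G] {n : ℕ} {s : Fin (n + 1) → Subgroup G}

lemma series_anti (hs : IsPrincipalSeries s) :
    ∀ d : ℕ, ∀ a b : Fin (n+1), b.val = a.val + d → s b ≤ s a := by
  intro d
  induction d with
  | zero => intro a b h; have : b = a := Fin.ext (by omega); rw [this]
  | succ d ih =>
    intro a b h
    have hlt : a.val + d < n := by omega
    set i : Fin n := ⟨a.val + d, hlt⟩ with hi
    have hb : b = i.succ := Fin.ext (by simp [Fin.val_succ, hi]; omega)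
    have hc : (i.castSucc : Fin (n+1)).val = a.val + d := rfl
    calc s b ≤ s i.castSucc := by rw [hb]; exact le_of_lt (hs.2.2.2.1 i)
    _ ≤ s a := ih a i.castSucc hc

lemma series_le (hs : IsPrincipalSeries s) {a b : Fin (n+1)} (h : a ≤ b) : s b ≤ s a :=
  series_anti hs (b.val - a.val) a b (by omega)

lemma exists_level (hs : IsPrincipalSeries s) {c : G} (hc : c ≠ 1) :
    ∀ (a : Fin (n+1)), c ∈ s a →
      ∃ j : Fin n, a.val ≤ j.val ∧ c ∈ s j.castSucc ∧ c ∉ s j.succ := by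
  suffices h : ∀ k : ℕ, ∀ a : Fin (n+1), n - a.val ≤ k → c ∈ s a →
      ∃ j : Fin n, a.val ≤ j.val ∧ c ∈ s j.castSucc ∧ c ∉ s j.succ by
    intro a ha; exact h (n - a.val) a le_rfl ha
  intro k
  induction k with
  | zero =>
    intro a hk ha
    have : a = Fin.last n := Fin.ext (by simp [Fin.val_last]; omega)
    rw [this, hs.2.1] at ha
    exact absurd (Subgroup.mem_bot.mp ha) hc
  | succ k ih =>
    intro a hk ha
    by_cases han : a.val < n
    · set j : Fin n := ⟨a.val, han⟩ with hj
      have hca : j.castSucc = a := Fin.ext rfl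
      by_cases hcs : c ∈ s j.succ
      · obtain ⟨j', h1, h2, h3⟩ := ih j.succ (by have e1 : (j.succ : ℕ) = a.val + 1 := rfl; omega) hcs
        exact ⟨j', by have e1 : (j.succ : ℕ) = a.val + 1 := rfl; omega, h2, h3⟩
      · exact ⟨j, le_rfl, by rw [hca]; exact ha, hcs⟩
    · have : a = Fin.last n := Fin.ext (by simp [Fin.val_last]; omega)
      rw [this, hs.2.1] at ha
      exact absurd (Subgroup.mem_bot.mp ha) hc

lemma killer (hs : IsPrincipalSeries s) (j : Fin n) {c g : G}
    (hc : c ∈ s j.castSucc) (hg : g ∉ s j.castSucc) (hcomm : c * g = g * c) :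
    c ∈ s j.succ := by
  have hconj : g⁻¹ * c * g = c := by
    rw [mul_assoc, hcomm, ← mul_assoc, inv_mul_cancel, one_mul]
  apply hs.2.2.2.2.2 j c hc 2 ![1, g] ![1, -1]
  · intro p q hpq
    fin_cases p <;> fin_cases q <;> simp_all <;>
      first
      | exact hg
      | exact fun hmem => hg ((s j.castSucc).inv_mem_iff.mp (by simpa using hmem))
  · exact ⟨0, by norm_num⟩
  · simpa [List.ofFn_succ, hconj] using one_mem _

end helpers

section part1
variable {G : Type*} [Group G] {n : ℕ} {s : Fin (n + 1) → Subgroup G}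

lemma part1_tf (hs : IsPrincipalSeries s) : ∀ g : G, g ≠ 1 → ¬IsOfFinOrder g := by
  intro g hg hfin
  obtain ⟨m, hm0, hm1⟩ := isOfFinOrder_iff_zpow_eq_one.mp hfin
  obtain ⟨j, _, hj1, hj2⟩ := exists_level hs hg 0 (by rw [hs.1]; trivial)
  apply hj2
  apply hs.2.2.2.2.2 j g hj1 1 ![1] ![m]
  · intro p q hpq; exact absurd (Subsingleton.elim p q) hpq
  · exact ⟨0, hm0⟩
  · simpa [List.ofFn_succ, hm1] using (s j.succ).one_mem

lemma part1_solv (hs : IsPrincipalSeries s) : IsSolvable G := by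
  have key : ∀ k : ℕ, derivedSeries G k ≤ s ⟨min k n, by omega⟩ := by
    intro k
    induction k with
    | zero =>
      rw [show (⟨min 0 n, by omega⟩ : Fin (n+1)) = 0 from Fin.ext (by simp), hs.1]
      exact le_top
    | succ k ih =>
      by_cases hk : k < n
      · have h1 : (⟨min k n, by omega⟩ : Fin (n+1)) = Fin.castSucc ⟨k, hk⟩ := Fin.ext (by simp; omega)
        have h2 : (⟨min (k+1) n, by omega⟩ : Fin (n+1)) = Fin.succ ⟨k, hk⟩ := Fin.ext (by simp; omega)
        rw [h2]
        apply Subgroup.commutator_le.mpr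
        intro x hx y hy
        have ih' : derivedSeries G k ≤ s (Fin.castSucc ⟨k, hk⟩) := by rw [← h1]; exact ih
        exact hs.2.2.2.2.1 ⟨k, hk⟩ x (ih' hx) y (ih' hy)
      · have h1 : (⟨min k n, by omega⟩ : Fin (n+1)) = Fin.last n := Fin.ext (by simp; omega)
        have h2 : (⟨min (k+1) n, by omega⟩ : Fin (n+1)) = Fin.last n := Fin.ext (by simp; omega)
        rw [h2]
        rw [h1] at ih
        apply Subgroup.commutator_le.mpr
        intro x hx y hy
        have : x = 1 := by rw [hs.2.1] at ih; simpa using ih hx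
        simp [this, hs.2.1]
  have hn : derivedSeries G n = ⊥ := by
    have := key n
    rw [show (⟨min n n, by omega⟩ : Fin (n+1)) = Fin.last n from Fin.ext (by simp), hs.2.1] at this
    exact le_bot_iff.mp this
  exact ⟨⟨n, hn⟩⟩

end part1

section part2
lemma part2 (G : Type*) [CommGroup G] (htf : ∀ g : G, g ≠ 1 → ¬IsOfFinOrder g) : ∃ n, IsRigid G n := by
  by_cases hG : Subsingleton G
  · refine ⟨0, fun _ => ⊤, rfl, ?_, fun _ => inferInstance, fun i => i.elim0, fun i => i.elim0,
      fun i => i.elim0⟩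
    apply Subgroup.ext; intro x; simp [Subsingleton.elim x 1]
  · have hnt : Nontrivial G := not_subsingleton_iff_nontrivial.mp hG
    refine ⟨1, ![⊤, ⊥], rfl, rfl, ?_, ?_, ?_, ?_⟩
    · intro i; fin_cases i <;> simp <;> infer_instance
    · intro i
      fin_cases i
      simp only [Fin.succ, Fin.castSucc]
      show (⊥ : Subgroup G) < ⊤
      refine bot_lt_iff_ne_bot.mpr (fun htop => ?_)
      obtain ⟨x, hx⟩ := exists_ne (1 : G)
      exact hx (Subgroup.mem_bot.mp (htop ▸ Subgroup.mem_top x))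
    · intro i x _ y _
      fin_cases i
      show ⁅x, y⁆ ∈ (⊥ : Subgroup G)
      simp [commutatorElement_eq_one_iff_mul_comm, mul_comm]
    · intro i c _ k h m hdist hex hprod
      fin_cases i
      show c ∈ (⊥ : Subgroup G)
      obtain ⟨j0, hj0⟩ := hex
      have hk : k = 1 := by
        have h1 : 1 ≤ k := j0.pos
        by_contra hne
        have h2 : 2 ≤ k := by omega
        exact hdist ⟨0, by omega⟩ ⟨1, by omega⟩ (by simp [Fin.ext_iff]) (by show _ ∈ (⊤ : Subgroup G); trivial)
      subst hk
      have hj0' : j0 = 0 := Subsingleton.elim _ _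
      subst hj0'
      have hterm : ((h 0)⁻¹ * c * h 0) ^ m 0 = c ^ m 0 := by
        rw [mul_comm ((h 0)⁻¹) c, mul_assoc, inv_mul_cancel, mul_one]
      have hprod' : c ^ m 0 = 1 := by
        have := hprod
        simp only [List.ofFn_succ, List.ofFn_zero, List.prod_cons, List.prod_nil, mul_one] at this
        rw [hterm] at this
        simpa using this
      simp only [Subgroup.mem_bot]
      by_contra hc
      exact htf c hc (isOfFinOrder_iff_zpow_eq_one.mpr ⟨m 0, hj0, hprod'⟩)
end part2

section part3
variable {H : Type*} [Group H]

def WeakStep (A B : Subgroup H) : Prop :=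
  B ≤ A ∧ (∀ x ∈ A, ∀ y ∈ A, ⁅x, y⁆ ∈ B) ∧
  (∀ c ∈ A, ∀ (k : ℕ) (h : Fin k → H) (m : Fin k → ℤ),
    (∀ j l : Fin k, j ≠ l → (h j)⁻¹ * h l ∉ A) →
    (∃ j, m j ≠ 0) →
    (List.ofFn fun j => ((h j)⁻¹ * c * h j) ^ m j).prod ∈ B →
    c ∈ B)

lemma weakStep_bot : WeakStep (⊥ : Subgroup H) ⊥ := by
  refine ⟨le_rfl, ?_, ?_⟩
  · intro x hx y hy
    simp only [Subgroup.mem_bot] at hx hy ⊢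
    simp [hx, hy]
  · intro c hc _ _ _ _ _ _; exact hc

lemma weak_to_rigid : ∀ (n : ℕ) (u : ℕ → Subgroup H), u 0 = ⊤ → (∀ i, n ≤ i → u i = ⊥) →
    (∀ i, (u i).Normal) → (∀ i, WeakStep (u i) (u (i + 1))) → ∃ k ≤ n, IsRigid H k := by
  intro n
  induction n with
  | zero =>
    intro u h0 hbot hnorm hstep
    have htb : (⊤ : Subgroup H) = ⊥ := by rw [← h0]; exact hbot 0 le_rfl
    refine ⟨0, le_rfl, fun _ => ⊤, rfl, ?_, fun _ => inferInstance, fun i => i.elim0,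
      fun i => i.elim0, fun i => i.elim0⟩
    exact htb
  | succ n ih =>
    intro u h0 hbot hnorm hstep
    by_cases hstrict : ∀ i < n + 1, u (i + 1) < u i
    · refine ⟨n + 1, le_rfl, fun j => u j, ?_, ?_, fun i => hnorm i, ?_, ?_, ?_⟩
      · simpa using h0
      · simpa using hbot (n + 1) le_rfl
      · intro i
        have := hstrict i.val i.isLt
        simpa [Fin.val_succ] using this
      · intro i x hx y hy
        exact (hstep i.val).2.1 x hx y hy
      · intro i c hc k h m hd he hp
        exact (hstep i.val).2.2 c hc k h m hd he hp
    · push_neg at hstrict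
      obtain ⟨i, hin, hilt⟩ := hstrict
      have heq : u (i + 1) = u i := ((hstep i).1.lt_or_eq).resolve_left hilt
      set u' : ℕ → Subgroup H := fun j => if j ≤ i then u j else u (j + 1) with hu'
      have hb' : ∀ j, n ≤ j → u' j = ⊥ := by
        intro j hj
        by_cases hji : j ≤ i
        · have hji2 : j = i := by omega
          simp only [hu', if_pos hji]
          rw [hji2, ← heq]
          exact hbot (i + 1) (by omega)
        · simp only [hu', if_neg hji]
          exact hbot (j + 1) (by omega)
      have hn' : ∀ j, (u' j).Normal := by
        intro j
        by_cases hji : j ≤ i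
        · simp only [hu', if_pos hji]; exact hnorm _
        · simp only [hu', if_neg hji]; exact hnorm _
      have hs' : ∀ j, WeakStep (u' j) (u' (j + 1)) := by
        intro j
        rcases lt_trichotomy j i with hj | hj | hj
        · have h1 : j ≤ i := le_of_lt hj
          have h2 : j + 1 ≤ i := hj
          simp only [hu', if_pos h1, if_pos h2]
          exact hstep j
        · subst hj
          have h2 : ¬ (j + 1 ≤ j) := by omega
          simp only [hu', if_pos le_rfl, if_neg h2]
          rw [← heq]
          exact hstep (j + 1)
        · have h1 : ¬ (j ≤ i) := by omega
          have h2 : ¬ (j + 1 ≤ i) := by omega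
          simp only [hu', if_neg h1, if_neg h2]
          exact hstep (j + 1)
      obtain ⟨k, hk, hr⟩ := ih u' (by simp [hu', h0]) hb' hn' hs'
      exact ⟨k, by omega, hr⟩
end part3

section part3b
variable {G : Type*} [Group G] {n : ℕ}

lemma part3 (hr : IsRigid G n) (H : Subgroup G) : ∃ k ≤ n, IsRigid H k := by
  obtain ⟨s, hs⟩ := hr
  set u : ℕ → Subgroup H := fun i => (s ⟨min i n, by omega⟩).comap H.subtype with hu
  apply weak_to_rigid n u
  · -- u 0 = ⊤
    have : (⟨min 0 n, by omega⟩ : Fin (n+1)) = 0 := Fin.ext (by simp)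
    simp only [hu, this, hs.1, Subgroup.comap_top]
  · -- bot
    intro i hi
    have : (⟨min i n, by omega⟩ : Fin (n+1)) = Fin.last n := Fin.ext (by simp; omega)
    simp only [hu, this, hs.2.1]
    rw [MonoidHom.comap_bot, Subgroup.ker_subtype]
  · intro i
    exact Subgroup.Normal.comap (hs.2.2.1 _) _
  · intro i
    by_cases hin : i < n
    · have h1 : (⟨min i n, by omega⟩ : Fin (n+1)) = Fin.castSucc ⟨i, hin⟩ := Fin.ext (by simp; omega)
      have h2 : (⟨min (i+1) n, by omega⟩ : Fin (n+1)) = Fin.succ ⟨i, hin⟩ := Fin.ext (by simp; omega)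
      simp only [hu, h1, h2]
      set fi : Fin n := ⟨i, hin⟩
      refine ⟨?_, ?_, ?_⟩
      · exact Subgroup.comap_mono (le_of_lt (hs.2.2.2.1 fi))
      · intro x hx y hy
        simp only [Subgroup.mem_comap] at hx hy ⊢
        have : H.subtype ⁅x, y⁆ = ⁅H.subtype x, H.subtype y⁆ := by
          simp [commutatorElement_def]
        rw [this]
        exact hs.2.2.2.2.1 fi _ hx _ hy
      · intro c hc k h m hdist hex hprod
        simp only [Subgroup.mem_comap] at hc ⊢
        apply hs.2.2.2.2.2 fi (H.subtype c) hc k (fun j => H.subtype (h j)) m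
        · intro j l hjl hmem
          apply hdist j l hjl
          simp only [Subgroup.mem_comap]
          simpa using hmem
        · exact hex
        · have : H.subtype ((List.ofFn fun j => ((h j)⁻¹ * c * h j) ^ m j).prod)
              = (List.ofFn fun j => ((H.subtype (h j))⁻¹ * H.subtype c * H.subtype (h j)) ^ m j).prod := by
            rw [map_list_prod, List.map_ofFn]
            refine congrArg List.prod (congrArg List.ofFn ?_)
            funext j
            push_cast
            rfl
          rw [← this]
          exact hprod
    · have h1 : (⟨min i n, by omega⟩ : Fin (n+1)) = Fin.last n := Fin.ext (by simp; omega)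
      have h2 : (⟨min (i+1) n, by omega⟩ : Fin (n+1)) = Fin.last n := Fin.ext (by simp; omega)
      have hb : u i = ⊥ := by
        simp only [hu, h1, hs.2.1]; rw [MonoidHom.comap_bot, Subgroup.ker_subtype]
      have hb2 : u (i+1) = ⊥ := by
        simp only [hu, h2, hs.2.1]; rw [MonoidHom.comap_bot, Subgroup.ker_subtype]
      rw [hb, hb2]
      exact weakStep_bot
end part3b

section part45
lemma part5 (G : Type*) [Group G] (hna : ¬ ∀ x y : G, x * y = y * x)
    (hz : Subgroup.center G ≠ ⊥) (n : ℕ) : ¬ IsRigid G n := by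
  rintro ⟨s, hs⟩
  rcases Nat.eq_zero_or_pos n with hn | hn
  · subst hn
    have htb : (⊤ : Subgroup G) = ⊥ := by
      rw [← hs.1, show (0 : Fin 1) = Fin.last 0 from Subsingleton.elim _ _, hs.2.1]
    apply hna
    intro x y
    have hx : x = 1 := Subgroup.mem_bot.mp (htb ▸ Subgroup.mem_top x)
    have hy : y = 1 := Subgroup.mem_bot.mp (htb ▸ Subgroup.mem_top y)
    rw [hx, hy]
  · obtain ⟨⟨z, hzc⟩, haz⟩ := Subgroup.ne_bot_iff_exists_ne_one.mp hz
    have hzne : z ≠ 1 := by simpa [Subtype.ext_iff] using haz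
    set i0 : Fin n := ⟨0, hn⟩ with hi0
    have hcast0 : i0.castSucc = 0 := Fin.ext rfl
    -- Claim A : z ∉ s i0.succ
    have claimA : z ∉ s i0.succ := by
      intro hz1
      obtain ⟨j, hj1, hj2, hj3⟩ := exists_level hs hzne i0.succ hz1
      have hlt : s j.castSucc < ⊤ := by
        calc s j.castSucc ≤ s i0.succ := series_le hs (by rw [Fin.le_def]; simpa using hj1)
        _ < s i0.castSucc := hs.2.2.2.1 i0
        _ ≤ ⊤ := le_top
      obtain ⟨g, hg⟩ : ∃ g, g ∉ s j.castSucc := by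
        by_contra hall
        push_neg at hall
        exact absurd (Subgroup.ext fun g => ⟨fun _ => Subgroup.mem_top g, fun _ => hall g⟩) (ne_of_lt hlt)
      exact hj3 (killer hs j hj2 hg ((Subgroup.mem_center_iff.mp hzc g).symm))
    push_neg at hna
    obtain ⟨x, y, hxy⟩ := hna
    set w : G := ⁅x, y⁆ with hw
    have hwne : w ≠ 1 := by
      rw [hw, Ne, commutatorElement_eq_one_iff_mul_comm]
      exact hxy
    have hw1 : w ∈ s i0.succ := by
      apply hs.2.2.2.2.1 i0 x _ y _ <;> rw [hcast0, hs.1] <;> trivial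
    obtain ⟨j, hj1, hj2, hj3⟩ := exists_level hs hwne i0.succ hw1
    have hzj : z ∉ s j.castSucc := fun hmem =>
      claimA (series_le hs (by rw [Fin.le_def]; simpa using hj1) hmem)
    exact hj3 (killer hs j hj2 hzj (Subgroup.mem_center_iff.mp hzc w))

lemma part4 (A B : Type*) [Group A] [Group B] (hA : Nontrivial A)
    (hB : ¬ ∀ x y : B, x * y = y * x) (n : ℕ) : ¬ IsRigid (A × B) n := by
  rintro ⟨s, hs⟩
  rcases Nat.eq_zero_or_pos n with hn | hn
  · subst hn
    have htb : (⊤ : Subgroup (A × B)) = ⊥ := by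
      rw [← hs.1, show (0 : Fin 1) = Fin.last 0 from Subsingleton.elim _ _, hs.2.1]
    apply hB
    intro x y
    have hx : ((1 : A), x) = (1 : A × B) := Subgroup.mem_bot.mp (htb ▸ Subgroup.mem_top _)
    have hx' : x = 1 := congrArg Prod.snd hx
    have hy : ((1 : A), y) = (1 : A × B) := Subgroup.mem_bot.mp (htb ▸ Subgroup.mem_top _)
    have hy' : y = 1 := congrArg Prod.snd hy
    rw [hx', hy']
  · obtain ⟨a, ha⟩ := exists_ne (1 : A)
    set c : A × B := (a, 1) with hc
    have hcne : c ≠ 1 := by simp [hc, Prod.ext_iff, ha]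
    obtain ⟨j0, hj01, hj02, hj03⟩ := exists_level hs hcne 0 (by rw [hs.1]; trivial)
    have claim : ∀ b : B, ((1 : A), b) ∈ s j0.castSucc := by
      intro b
      by_contra hb
      have hcomm : c * ((1 : A), b) = ((1 : A), b) * c := by
        simp [hc, Prod.ext_iff, mul_comm]
      exact hj03 (killer hs j0 hj02 hb hcomm)
    push_neg at hB
    obtain ⟨b1, b2, hb12⟩ := hB
    set w : A × B := ⁅((1 : A), b1), ((1 : A), b2)⁆ with hwdef
    have hwfst : w.1 = 1 := by simp [hwdef, commutatorElement_def]
    have hwne : w ≠ 1 := by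
      rw [hwdef, Ne, commutatorElement_eq_one_iff_mul_comm]
      intro h
      exact hb12 (by simpa using h)
    have hw1 : w ∈ s j0.succ := hs.2.2.2.2.1 j0 _ (claim b1) _ (claim b2)
    obtain ⟨j1, h1, h2, h3⟩ := exists_level hs hwne j0.succ hw1
    have hcnot : c ∉ s j1.castSucc := fun hmem =>
      hj03 (series_le hs (by rw [Fin.le_def]; simpa using h1) hmem)
    have hcomm : w * c = c * w := by
      rw [show w = ((1 : A), w.2) from Prod.ext hwfst rfl]
      simp [hc, Prod.ext_iff, mul_comm]
    exact h3 (killer hs j1 h2 hcnot hcomm)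
end part45

theorem stmt13 :
    (∀ (G : Type) [Group G] (n : ℕ), IsRigid G n →
      (∀ g : G, g ≠ 1 → ¬IsOfFinOrder g) ∧ IsSolvable G) ∧
    (∀ (G : Type) [CommGroup G], (∀ g : G, g ≠ 1 → ¬IsOfFinOrder g) → ∃ n, IsRigid G n) ∧
    (∀ (G : Type) [Group G] (n : ℕ), IsRigid G n →
      ∀ H : Subgroup G, ∃ k ≤ n, IsRigid H k) ∧
    (∀ (A B : Type) [Group A] [Group B], Nontrivial A →
      (¬ ∀ x y : B, x * y = y * x) → ∀ n, ¬ IsRigid (A × B) n) ∧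
    (∀ (G : Type) [Group G], (¬ ∀ x y : G, x * y = y * x) →
      Subgroup.center G ≠ ⊥ → ∀ n, ¬ IsRigid G n) := by
  refine ⟨?_, ?_, ?_, ?_, ?_⟩
  · rintro G _ n ⟨s, hs⟩
    exact ⟨part1_tf hs, part1_solv hs⟩
  · intro G _ htf
    exact part2 G htf
  · intro G _ n hr H
    exact part3 hr H
  · intro A B _ _ hA hB n
    exact part4 A B hA hB n
  · intro G _ hna hz n
    exact part5 G hna hz n
end

section
/- Let A be an n-rigid group with principal series A = A_1 > A_2 > ... > A_n > A_{n+1} = 1, and let G be a group containing A as a subgroup. Suppose Φ is a set of A-epimorphisms from G onto A that A-discriminates G. Then: (1) G is an n-rigid group; (2) if G = G_1 > G_2 > ... > G_n > G_{n+1} = 1 is the principal series of G, then G_i φ = A_i for every φ in Φ and every i = 1, ..., n+1; (3) for each i, the group A/A_i discriminates the group G/G_i by the set of epimorphisms induced from Φ. -/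
/-!
STATEMENT 18 (Lemma on discrimination): Let `A` be an `n`-rigid group with principal
series `A = A_1 > ... > A_{n+1} = 1`, and `G` a group containing `A` as a subgroup.
Suppose `Φ` is a set of `A`-epimorphisms `G → A` (surjective homomorphisms fixing `A`
pointwise) that `A`-discriminates `G`. Then: (1) `G` is `n`-rigid; (2) if
`G = G_1 > ... > G_{n+1} = 1` is the principal series of `G` then `G_i φ = A_i` for
every `φ ∈ Φ` and all `i`; (3) `A/A_i` discriminates `G/G_i` by the set of epimorphisms
induced from `Φ` (expressed on coset representatives: some `φ ∈ Φ` maps any finitely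
many pairwise distinct cosets mod `G_i` to pairwise distinct cosets mod `A_i`).
-/

open scoped commutatorElement

private def chainV {G : Type*} [Group G] (d : ℕ → G) : ℕ → G → G
  | 0, u => u
  | (k+1), u => chainV d k ((d k)⁻¹ * u⁻¹ * d k * u)

private lemma chainV_map {G H : Type*} [Group G] [Group H] (φ : G →* H)
    {d : ℕ → G} {d' : ℕ → H} (hd : ∀ j, φ (d j) = d' j) :
    ∀ (k : ℕ) (u : G), φ (chainV d k u) = chainV d' k (φ u) := by
  intro k
  induction k with
  | zero => intro u; rfl
  | succ k ih =>
    intro u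
    show φ (chainV d k _) = chainV d' k _
    rw [ih]
    congr 1
    simp [hd k]

private lemma prod2 {G : Type*} [Group G] (c u : G) :
    (List.ofFn fun j : Fin 2 => (((![1, u] : Fin 2 → G) j)⁻¹ * c * (![1, u] : Fin 2 → G) j)
      ^ ((![-1, 1] : Fin 2 → ℤ) j)).prod = c⁻¹ * u⁻¹ * c * u := by
  simp [List.ofFn_succ]
  group

private lemma T2 {G : Type*} [Group G] {n : ℕ} {s : Fin (n+1) → Subgroup G}
    (hs : IsPrincipalSeries s) (i : Fin n) {c u : G} (hc : c ∈ s i.castSucc)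
    (hu : u ∉ s i.castSucc) (h : c⁻¹ * u⁻¹ * c * u ∈ s i.succ) : c ∈ s i.succ := by
  refine hs.2.2.2.2.2 i c hc 2 ![1, u] ![-1, 1] ?_ ⟨0, by norm_num⟩ ?_
  · intro j l hjl
    fin_cases j <;> fin_cases l <;> simp_all <;>
      simpa using fun hmem => hu (by simpa using inv_mem hmem)
  · rw [prod2]; exact h

private lemma SE {G : Type*} [Group G] {n : ℕ} {s : Fin (n+1) → Subgroup G}
    (hs : IsPrincipalSeries s) (i : Fin n) {c : G} (hc : c ∈ s i.castSucc)
    (hc' : c ∉ s i.succ) (u : G) :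
    u ∈ s i.castSucc ↔ c⁻¹ * u⁻¹ * c * u ∈ s i.succ := by
  constructor
  · intro hu
    have : ⁅c⁻¹, u⁻¹⁆ ∈ s i.succ :=
      hs.2.2.2.2.1 i c⁻¹ (inv_mem hc) u⁻¹ (inv_mem hu)
    simpa [commutatorElement_def] using this
  · intro h
    by_contra hu
    exact hc' (T2 hs i hc hu h)
private def Dser {G : Type*} [Group G] (N : Subgroup G) : ℕ → Subgroup G
  | 0 => N
  | (k+1) => ⁅Dser N k, Dser N k⁆

private lemma Dser_normal {G : Type*} [Group G] (N : Subgroup G) [hN : N.Normal] :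
    ∀ k, (Dser N k).Normal := by
  intro k
  induction k with
  | zero => exact hN
  | succ k ih =>
    haveI := ih
    exact Subgroup.commutator_normal _ _

private lemma Dser_succ_le {G : Type*} [Group G] (N : Subgroup G) [hN : N.Normal] (k : ℕ) :
    Dser N (k+1) ≤ Dser N k := by
  haveI := Dser_normal N k
  show ⁅Dser N k, Dser N k⁆ ≤ Dser N k
  rw [Subgroup.commutator_le]
  intro g1 h1 g2 h2
  rw [commutatorElement_def]
  exact mul_mem (mul_mem (mul_mem h1 h2) (inv_mem h1)) (inv_mem h2)

private lemma Dser_le_Dser {G : Type*} [Group G] (N : Subgroup G) [hN : N.Normal]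
    {a b : ℕ} (h : b ≤ a) : Dser N a ≤ Dser N b := by
  induction a with
  | zero => simp_all
  | succ a ih =>
    rcases Nat.lt_or_ge b (a+1) with h' | h'
    · exact le_trans (Dser_succ_le N a) (ih (by omega))
    · have : b = a + 1 := by omega
      subst this; exact le_rfl
set_option maxHeartbeats 1000000 in
private lemma derived_le {G : Type*} [Group G] {n : ℕ} {t : Fin (n+1) → Subgroup G}
    (ht : IsPrincipalSeries t) (N : Subgroup G) {i : ℕ} (hi : i < n + 1)
    (hNt : N ≤ t ⟨i, hi⟩) :
    ∀ k (hk : i + k ≤ n), Dser N k ≤ t ⟨i + k, by omega⟩ := by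
  intro k
  induction k with
  | zero => intro _; exact hNt
  | succ k ih =>
    intro hk
    have hk' : i + k ≤ n := by omega
    have h1 := ih hk'
    show ⁅Dser N k, Dser N k⁆ ≤ _
    rw [Subgroup.commutator_le]
    intro x hx y hy
    have hlt : i + k < n := by omega
    have e1 : ((⟨i + k, hlt⟩ : Fin n).castSucc : Fin (n+1)) = ⟨i + k, by omega⟩ := rfl
    have e2 : ((⟨i + k, hlt⟩ : Fin n).succ : Fin (n+1)) = ⟨i + k + 1, by omega⟩ := rfl
    have := ht.2.2.2.2.1 ⟨i + k, hlt⟩ x (by rw [e1]; exact h1 hx) y (by rw [e1]; exact h1 hy)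
    rw [e2] at this
    exact this

set_option maxHeartbeats 1000000 in
private lemma ladder {G : Type*} [Group G] {n : ℕ} {s : Fin (n+1) → Subgroup G}
    (hs : IsPrincipalSeries s) {g : G} {j : ℕ} (hj : j < n)
    (hg1 : g ∈ s ⟨j, by omega⟩) (hg2 : g ∉ s ⟨j+1, by omega⟩) :
    ∀ k (hk : j + k < n), ∃ u, u ∈ Dser (Subgroup.normalClosure {g}) k ∧
      u ∈ s ⟨j+k, Nat.lt_succ_of_lt hk⟩ ∧ u ∉ s ⟨j+k+1, Nat.succ_lt_succ hk⟩ := by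
  haveI hNnorm : (Subgroup.normalClosure {g}).Normal := Subgroup.normalClosure_normal
  intro k
  induction k with
  | zero =>
    intro hk
    exact ⟨g, Subgroup.subset_normalClosure (Set.mem_singleton g), hg1, hg2⟩
  | succ k ih =>
    intro hk
    have hk' : j + k < n := by omega
    obtain ⟨u, huD, hu1, hu2⟩ := ih hk'
    haveI hDnorm : (Dser (Subgroup.normalClosure {g}) k).Normal := Dser_normal _ k
    have hlt : j + k + 1 < n := by omega
    obtain ⟨x, hx1, hx2⟩ := SetLike.exists_of_lt (hs.2.2.2.1 ⟨j + k + 1, hlt⟩)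
    have hx1' : x ∈ s ⟨j + k + 1, by omega⟩ := hx1
    have hx2' : x ∉ s ⟨j + k + 2, by omega⟩ := hx2
    have hu2' : u ∉ s ⟨j + k + 1, by omega⟩ := hu2
    haveI hsnorm : (s (⟨j + k + 1, by omega⟩ : Fin (n+1))).Normal := hs.2.2.1 _
    have hm1 : u⁻¹ * x⁻¹ * u * x ∈ s ⟨j + k + 1, by omega⟩ := by
      have h1 : u⁻¹ * x⁻¹ * (u⁻¹)⁻¹ ∈ s ⟨j + k + 1, by omega⟩ :=
        hsnorm.conj_mem x⁻¹ (inv_mem hx1') u⁻¹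
      have h2 := mul_mem h1 hx1'
      have e : u⁻¹ * x⁻¹ * (u⁻¹)⁻¹ * x = u⁻¹ * x⁻¹ * u * x := by group
      rwa [e] at h2
    have hm2 : u⁻¹ * x⁻¹ * u * x ∉ s ⟨j + k + 2, by omega⟩ := by
      intro hmem
      apply hx2'
      have hinv := inv_mem hmem
      have e : (u⁻¹ * x⁻¹ * u * x)⁻¹ = x⁻¹ * u⁻¹ * x * u := by group
      rw [e] at hinv
      exact T2 hs ⟨j + k + 1, hlt⟩ hx1' hu2' hinv
    have hmD : u⁻¹ * x⁻¹ * u * x ∈ Dser (Subgroup.normalClosure {g}) k := by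
      have h1 : x⁻¹ * u * (x⁻¹)⁻¹ ∈ Dser (Subgroup.normalClosure {g}) k :=
        hDnorm.conj_mem u huD x⁻¹
      have h2 := mul_mem (inv_mem huD) h1
      have e : u⁻¹ * (x⁻¹ * u * (x⁻¹)⁻¹) = u⁻¹ * x⁻¹ * u * x := by group
      rwa [e] at h2
    refine ⟨(u⁻¹ * x⁻¹ * u * x)⁻¹ * u⁻¹ * (u⁻¹ * x⁻¹ * u * x) * u, ?_, ?_, ?_⟩
    · have hcomm : ⁅(u⁻¹ * x⁻¹ * u * x)⁻¹, u⁻¹⁆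
          = (u⁻¹ * x⁻¹ * u * x)⁻¹ * u⁻¹ * (u⁻¹ * x⁻¹ * u * x) * u := by
        rw [commutatorElement_def]; group
      rw [← hcomm]
      exact Subgroup.commutator_mem_commutator (inv_mem hmD) (inv_mem huD)
    · show _ ∈ s ⟨j + k + 1, by omega⟩
      have h1 : u⁻¹ * (u⁻¹ * x⁻¹ * u * x) * (u⁻¹)⁻¹ ∈ s ⟨j + k + 1, by omega⟩ :=
        hsnorm.conj_mem _ hm1 u⁻¹
      have h2 := mul_mem (mul_mem (inv_mem hm1) h1) (mul_mem (inv_mem hx1') hx1')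
      have e : (u⁻¹ * x⁻¹ * u * x)⁻¹ * (u⁻¹ * (u⁻¹ * x⁻¹ * u * x) * (u⁻¹)⁻¹) * (x⁻¹ * x)
          = (u⁻¹ * x⁻¹ * u * x)⁻¹ * u⁻¹ * (u⁻¹ * x⁻¹ * u * x) * u := by group
      rwa [e] at h2
    · show _ ∉ s ⟨j + k + 2, by omega⟩
      intro hmem
      exact hm2 (T2 hs ⟨j + k + 1, hlt⟩ hm1 hu2' hmem)
private lemma exists_boundary {P : ℕ → Prop} {b : ℕ} (h0 : P 0) (hb : ¬ P b) :
    ∃ j, j < b ∧ P j ∧ ¬ P (j+1) := by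
  induction b with
  | zero => exact absurd h0 hb
  | succ b ih =>
    by_cases hPb : P b
    · exact ⟨b, Nat.lt_succ_self b, hPb, hb⟩
    · obtain ⟨j, hj, h1, h2⟩ := ih hPb
      exact ⟨j, by omega, h1, h2⟩

set_option maxHeartbeats 1000000 in
private lemma uniq_le {G : Type*} [Group G] {n : ℕ} {s t : Fin (n+1) → Subgroup G}
    (hs : IsPrincipalSeries s) (ht : IsPrincipalSeries t) : ∀ i, t i ≤ s i := by
  classical
  intro i g hg
  by_contra hgs
  have h0 : g ∈ s ⟨0, by omega⟩ := by
    have h : s 0 = ⊤ := hs.1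
    have e : (⟨0, by omega⟩ : Fin (n+1)) = 0 := rfl
    rw [e, h]; trivial
  have hin : (⟨min i.1 n, by omega⟩ : Fin (n+1)) = i := by
    apply Fin.ext; simp; omega
  obtain ⟨j, hjb, hP1, hP2⟩ := exists_boundary (P := fun l => g ∈ s ⟨min l n, by omega⟩)
    (by simpa using h0) (b := i.1) (by show ¬ g ∈ s ⟨min i.1 n, by omega⟩; rw [hin]; exact hgs)
  have hji : j + 1 ≤ i.1 := hjb
  have hjn : j < n := by
    have := i.isLt; omega
  have hg1 : g ∈ s ⟨j, by omega⟩ := by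
    have e : (⟨min j n, by omega⟩ : Fin (n+1)) = ⟨j, by omega⟩ := by
      apply Fin.ext; simp; omega
    rwa [e] at hP1
  have hg2 : g ∉ s ⟨j + 1, by omega⟩ := by
    have e : (⟨min (j+1) n, by omega⟩ : Fin (n+1)) = ⟨j + 1, by omega⟩ := by
      apply Fin.ext; simp; omega
    rwa [e] at hP2
  obtain ⟨u, huD, hu1, hu2⟩ := ladder hs hjn hg1 hg2 (n - 1 - j) (by omega)
  haveI : (t i).Normal := ht.2.2.1 i
  have hNt : Subgroup.normalClosure {g} ≤ t i :=
    Subgroup.normalClosure_le_normal (by simpa using hg)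
  have hit : (⟨i.1, i.isLt⟩ : Fin (n+1)) = i := rfl
  have hder := derived_le ht (Subgroup.normalClosure {g}) i.isLt (by rw [hit]; exact hNt)
    (n - i.1) (by omega)
  haveI : (Subgroup.normalClosure {g} : Subgroup G).Normal := Subgroup.normalClosure_normal
  have hmono : Dser (Subgroup.normalClosure {g}) (n - 1 - j)
      ≤ Dser (Subgroup.normalClosure {g}) (n - i.1) := Dser_le_Dser _ (by omega)
  have hu3 := hder (hmono huD)
  have e2 : (⟨i.1 + (n - i.1), by omega⟩ : Fin (n+1)) = Fin.last n := by
    apply Fin.ext; simp; omega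
  rw [e2, ht.2.1] at hu3
  have e3 : (⟨j + (n - 1 - j) + 1, by omega⟩ : Fin (n+1)) = Fin.last n := by
    apply Fin.ext; simp; omega
  rw [e3, hs.2.1] at hu2
  exact hu2 hu3
set_option maxHeartbeats 1000000 in
private lemma chain_char {G : Type*} [Group G] {n : ℕ} {s : Fin (n+1) → Subgroup G}
    (hs : IsPrincipalSeries s) (cs : Fin n → G)
    (hc1 : ∀ i, cs i ∈ s i.castSucc) (hc2 : ∀ i, cs i ∉ s i.succ) :
    ∀ k (hk : k ≤ n) (u : G),
      u ∈ s ⟨n - k, by omega⟩ ↔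
        chainV (fun m => if h : n - (m+1) < n then cs ⟨n - (m+1), h⟩ else 1) k u = 1 := by
  intro k
  induction k with
  | zero =>
    intro hk u
    have e : (⟨n - 0, by omega⟩ : Fin (n+1)) = Fin.last n := by
      apply Fin.ext; simp
    rw [e, hs.2.1]
    exact Subgroup.mem_bot
  | succ k ih =>
    intro hk u
    have hj : n - (k+1) < n := by omega
    have hd : (fun m => if h : n - (m+1) < n then cs ⟨n - (m+1), h⟩ else 1) k
        = cs ⟨n - (k+1), hj⟩ := dif_pos hj
    have hcast : ((⟨n - (k+1), hj⟩ : Fin n).castSucc : Fin (n+1)) = ⟨n - (k+1), by omega⟩ := rfl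
    have hsucc : ((⟨n - (k+1), hj⟩ : Fin n).succ : Fin (n+1)) = ⟨n - k, by omega⟩ := by
      apply Fin.ext; simp; omega
    have hse := SE hs ⟨n - (k+1), hj⟩ (hc1 _) (hc2 _) u
    rw [hcast, hsucc] at hse
    rw [hse]
    have e : chainV (fun m => if h : n - (m+1) < n then cs ⟨n - (m+1), h⟩ else 1) (k+1) u
        = chainV (fun m => if h : n - (m+1) < n then cs ⟨n - (m+1), h⟩ else 1) k
          ((cs ⟨n - (k+1), hj⟩)⁻¹ * u⁻¹ * cs ⟨n - (k+1), hj⟩ * u) := by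
      show chainV _ k _ = _
      rw [hd]
    rw [e]
    exact ih (by omega) _

private def Tser {G : Type} [Group G] {n : ℕ} (A : Subgroup G)
    (sA : Fin (n + 1) → Subgroup A) (Φ : Set (G →* A)) (i : Fin (n + 1)) : Subgroup G where
  carrier := {g | ∀ φ ∈ Φ, φ g ∈ sA i}
  one_mem' := fun φ _ => by rw [map_one]; exact one_mem _
  mul_mem' := fun ha hb φ hφ => by rw [map_mul]; exact mul_mem (ha φ hφ) (hb φ hφ)
  inv_mem' := fun ha φ hφ => by rw [map_inv]; exact inv_mem (ha φ hφ)

private lemma mem_Tser {G : Type} [Group G] {n : ℕ} {A : Subgroup G}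
    {sA : Fin (n + 1) → Subgroup A} {Φ : Set (G →* A)} {i : Fin (n + 1)} {g : G} :
    g ∈ Tser A sA Φ i ↔ ∀ φ ∈ Φ, φ g ∈ sA i := Iff.rfl

set_option maxHeartbeats 2000000 in
theorem stmt18 {G : Type} [Group G] (n : ℕ) (A : Subgroup G)
    (sA : Fin (n + 1) → Subgroup A) (hsA : IsPrincipalSeries sA)
    (Φ : Set (G →* A))
    (hepi : ∀ φ ∈ Φ, Function.Surjective φ)
    (hfix : ∀ φ ∈ Φ, ∀ a : A, φ ↑a = a)
    (hdisc : ∀ K : Finset G, ∃ φ ∈ Φ, Set.InjOn φ ↑K) :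
    IsRigid G n ∧
    ∀ sG : Fin (n + 1) → Subgroup G, IsPrincipalSeries sG →
      (∀ φ ∈ Φ, ∀ i : Fin (n + 1), Subgroup.map φ (sG i) = sA i) ∧
      (∀ i : Fin (n + 1), ∀ K : Finset G, ∃ φ ∈ Φ,
        ∀ x ∈ K, ∀ y ∈ K, (φ x)⁻¹ * φ y ∈ sA i → x⁻¹ * y ∈ sG i) := by
  classical
  obtain ⟨φ₀, hφ₀Φ, -⟩ := hdisc ∅
  have sep1 : ∀ g : G, (∀ φ ∈ Φ, φ g = 1) → g = 1 := by
    intro g hg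
    obtain ⟨φ, hφ, hinj⟩ := hdisc {g, 1}
    exact hinj (by simp) (by simp) (by rw [map_one, hg φ hφ])
  have hstrict := hsA.2.2.2.1
  choose cs hcs1 hcs2 using fun i : Fin n => SetLike.exists_of_lt (hstrict i)
  set dA : ℕ → A := fun m => if h : n - (m+1) < n then cs ⟨n - (m+1), h⟩ else 1 with hdA
  set dG : ℕ → G := fun m => ((dA m : A) : G) with hdG
  have hfixd : ∀ φ ∈ Φ, ∀ m, φ (dG m) = dA m := fun φ hφ m => hfix φ hφ (dA m)
  have CA' : ∀ k (hk : k ≤ n) (u : A), u ∈ sA ⟨n - k, by omega⟩ ↔ chainV dA k u = 1 := by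
    intro k hk u
    rw [hdA]
    exact chain_char hsA cs hcs1 hcs2 k hk u
  have CG' : ∀ k (hk : k ≤ n) (g : G),
      g ∈ Tser A sA Φ ⟨n - k, by omega⟩ ↔ chainV dG k g = 1 := by
    intro k hk g
    constructor
    · intro hgmem
      apply sep1
      intro φ hφ
      rw [chainV_map φ (hfixd φ hφ)]
      exact (CA' k hk (φ g)).mp (mem_Tser.mp hgmem φ hφ)
    · intro hg
      apply mem_Tser.mpr
      intro φ hφ
      apply (CA' k hk (φ g)).mpr
      rw [← chainV_map φ (hfixd φ hφ), hg, map_one]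
  have hidx : ∀ i : Fin (n+1), (⟨n - (n - i.1), by omega⟩ : Fin (n+1)) = i := by
    intro i
    have := i.isLt
    apply Fin.ext
    simp
    omega
  have CAi : ∀ (i : Fin (n+1)) (u : A), u ∈ sA i ↔ chainV dA (n - i.1) u = 1 := by
    intro i u
    have h := CA' (n - i.1) (by omega) u
    rwa [hidx i] at h
  have CGi : ∀ (i : Fin (n+1)) (g : G),
      g ∈ Tser A sA Φ i ↔ chainV dG (n - i.1) g = 1 := by
    intro i g
    have h := CG' (n - i.1) (by omega) g
    rwa [hidx i] at h
  have hT : IsPrincipalSeries (Tser A sA Φ) := by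
    refine ⟨?_, ?_, ?_, ?_, ?_, ?_⟩
    · rw [eq_top_iff]
      intro g _
      apply mem_Tser.mpr
      intro φ hφ
      rw [hsA.1]
      trivial
    · ext g
      rw [mem_Tser, Subgroup.mem_bot]
      constructor
      · intro hg
        apply sep1
        intro φ hφ
        have h1 := hg φ hφ
        rwa [hsA.2.1, Subgroup.mem_bot] at h1
      · rintro rfl φ hφ
        rw [map_one]
        exact one_mem _
    · intro i
      constructor
      intro x hx g
      apply mem_Tser.mpr
      intro φ hφ
      rw [map_mul, map_mul, map_inv]
      exact (hsA.2.2.1 i).conj_mem _ (mem_Tser.mp hx φ hφ) _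
    · intro i
      rw [SetLike.lt_iff_le_and_exists]
      constructor
      · intro g hg
        apply mem_Tser.mpr
        intro φ hφ
        exact le_of_lt (hstrict i) (mem_Tser.mp hg φ hφ)
      · refine ⟨↑(cs i), mem_Tser.mpr fun φ hφ => by rw [hfix φ hφ]; exact hcs1 i,
          fun hcon => ?_⟩
        have h1 := mem_Tser.mp hcon φ₀ hφ₀Φ
        rw [hfix φ₀ hφ₀Φ] at h1
        exact hcs2 i h1
    · intro i x hx y hy
      apply mem_Tser.mpr
      intro φ hφ
      rw [map_commutatorElement]
      exact hsA.2.2.2.2.1 i _ (mem_Tser.mp hx φ hφ) _ (mem_Tser.mp hy φ hφ)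
    · intro i c hc k h m hdist hmne hprod
      by_contra hcon
      have hE0 : chainV dG (n - (i.succ).1) c ≠ 1 := fun h1 => hcon ((CGi i.succ c).mpr h1)
      obtain ⟨φ, hφ, hinj⟩ := hdisc (insert 1 (insert (chainV dG (n - (i.succ).1) c)
        ((Finset.univ : Finset (Fin k × Fin k)).image
          fun jl => chainV dG (n - (i.castSucc).1) ((h jl.1)⁻¹ * h jl.2))))
      have hφc : φ c ∈ sA i.castSucc := mem_Tser.mp hc φ hφ
      have hdist' : ∀ j l : Fin k, j ≠ l → (φ (h j))⁻¹ * φ (h l) ∉ sA i.castSucc := by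
        intro j l hjl hmem
        have hne : chainV dG (n - (i.castSucc).1) ((h j)⁻¹ * h l) ≠ 1 :=
          fun h1 => hdist j l hjl ((CGi i.castSucc _).mpr h1)
        apply hne
        apply hinj (Finset.mem_coe.mpr (Finset.mem_insert_of_mem (Finset.mem_insert_of_mem
          (Finset.mem_image.mpr ⟨(j, l), Finset.mem_univ _, rfl⟩))))
          (Finset.mem_coe.mpr (Finset.mem_insert_self _ _))
        rw [map_one, chainV_map φ (hfixd φ hφ), map_mul, map_inv]
        exact (CAi i.castSucc _).mp hmem
      have hprodA : (List.ofFn fun j => ((φ (h j))⁻¹ * (φ c) * φ (h j)) ^ m j).prod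
          ∈ sA i.succ := by
        have h1 := mem_Tser.mp hprod φ hφ
        have h2 : φ ((List.ofFn fun j => ((h j)⁻¹ * c * h j) ^ m j).prod)
            = (List.ofFn fun j => ((φ (h j))⁻¹ * (φ c) * φ (h j)) ^ m j).prod := by
          rw [map_list_prod, List.map_ofFn]
          refine congrArg List.prod (congrArg List.ofFn (funext fun j => ?_))
          show φ (((h j)⁻¹ * c * h j) ^ m j) = ((φ (h j))⁻¹ * φ c * φ (h j)) ^ m j
          simp [map_zpow]
        rwa [h2] at h1
      have hres := hsA.2.2.2.2.2 i (φ c) hφc k (fun j => φ (h j)) m hdist' hmne hprodA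
      apply hE0
      apply hinj (Finset.mem_coe.mpr (Finset.mem_insert_of_mem (Finset.mem_insert_self _ _)))
        (Finset.mem_coe.mpr (Finset.mem_insert_self _ _))
      rw [map_one, chainV_map φ (hfixd φ hφ)]
      exact (CAi i.succ _).mp hres
  refine ⟨⟨Tser A sA Φ, hT⟩, ?_⟩
  intro sG hsG
  have hST : ∀ i, sG i = Tser A sA Φ i := fun i =>
    le_antisymm (uniq_le hT hsG i) (uniq_le hsG hT i)
  constructor
  · intro φ hφ i
    rw [hST i]
    ext b
    simp only [Subgroup.mem_map]
    constructor
    · rintro ⟨g, hg, rfl⟩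
      exact mem_Tser.mp hg φ hφ
    · intro hb
      exact ⟨(b : G), mem_Tser.mpr fun ψ hψ => by rw [hfix ψ hψ]; exact hb, hfix φ hφ b⟩
  · intro i K
    obtain ⟨φ, hφ, hinj⟩ := hdisc (insert (1 : G)
      ((K ×ˢ K).image fun p => chainV dG (n - i.1) (p.1⁻¹ * p.2)))
    refine ⟨φ, hφ, ?_⟩
    intro x hx y hy hxy
    rw [hST i]
    apply (CGi i _).mpr
    apply hinj (Finset.mem_coe.mpr (Finset.mem_insert_of_mem (Finset.mem_image.mpr
      ⟨(x, y), Finset.mem_product.mpr ⟨hx, hy⟩, rfl⟩)))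
      (Finset.mem_coe.mpr (Finset.mem_insert_self _ _))
    rw [map_one, chainV_map φ (hfixd φ hφ), map_mul, map_inv]
    exact (CAi i _).mp hxy
end
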